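/- Let 𝒟 be a symmetric set of tournaments on X, let t ∈ pr-cl(𝒟), and let x, y ∈ X be distinct. For a permutation π of X let t^π be the weighted tournament with t^π(u,v) = t(π⁻¹(u), π⁻¹(v)), and let t* = (1/(n−2)!) · Σ_{π ∈ Π_{x,y}} t^π, where Π_{x,y} is the set of permutations of X fixing x and y. Then t* ∈ pr-cl(𝒟) and t* = t⟨x,y,a,s0,s1⟩, where a = t(x,y), s0 = (Σ_{z ∈ X∖{x,y}} t(x,z))/(n−2), and s1 = (Σ_{z ∈ X∖{x,y}} t(y,z))/(n−2). -/

import Mathlib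

open scoped BigOperators

variable {X : Type*}

/-- A tournament on `X`: irreflexive and, on distinct points, exactly one direction holds. -/
def IsTournament (R : X → X → Prop) : Prop :=
  (∀ x, ¬ R x x) ∧ ∀ x y : X, x ≠ y → (R x y ↔ ¬ R y x)

/-- Out-degree of `x` in the relation `R`. -/
noncomputable def valT (R : X → X → Prop) (x : X) : ℕ :=
  Set.ncard {y | R x y}

/-- A tournament is balanced if every out-degree equals `(n-1)/2`. -/
def IsBalanced [Fintype X] (R : X → X → Prop) : Prop :=
  ∀ x : X, (valT R x : ℝ) = ((Fintype.card X : ℝ) - 1) / 2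

/-- Action of a permutation on a relation. -/
def permAct (π : Equiv.Perm X) (R : X → X → Prop) : X → X → Prop :=
  fun x y => R (π.symm x) (π.symm y)

/-- A set of relations closed under the permutation action. -/
def SymmetricSet (D : Set (X → X → Prop)) : Prop :=
  ∀ (π : Equiv.Perm X), ∀ R ∈ D, permAct π R ∈ D

/-- The majority closure of a set of tournaments. -/
def majCl [Fintype X] (D : Set (X → X → Prop)) : Set (X → X → Prop) :=
  {d | IsTournament d ∧ ∃ w : (X → X → Prop) → ℝ,
    (∀ c, 0 ≤ w c ∧ w c ≤ 1) ∧
    (∀ c, w c ≠ 0 → c ∈ D) ∧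
    (Function.support w).Finite ∧
    (∑ᶠ c, w c) = 1 ∧
    ∀ x y : X, x ≠ y →
      (d x y ↔ 1 / 2 < ∑ᶠ c ∈ {c : X → X → Prop | c ∈ D ∧ c x y}, w c)}

open Classical in
noncomputable def tOf (d : X → X → Prop) : X → X → ℝ :=
  fun x y => if d x y then 1 else 0

/-- pr-cl: the convex hull of `{t[d] : d ∈ D}`. -/
noncomputable def prCl (D : Set (X → X → Prop)) : Set (X → X → ℝ) :=
  convexHull ℝ (tOf '' D)

/-- `t` is a weighted tournament. -/
def IsWeighted (t : X → X → ℝ) : Prop :=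
  ∀ x y : X, x ≠ y → 0 ≤ t x y ∧ t x y ≤ 1 ∧ t y x = 1 - t x y

/-- A weighted tournament is balanced if each row sums to `(n-1)/2`. -/
def BalancedW [Fintype X] (t : X → X → ℝ) : Prop :=
  ∀ x : X, (∑ᶠ y ∈ {y : X | y ≠ x}, t x y) = ((Fintype.card X : ℝ) - 1) / 2

/-- A tournament is pseudo-balanced if it is dominated by a balanced weighted tournament. -/
def PseudoBalanced [Fintype X] (c : X → X → Prop) : Prop :=
  ∃ t : X → X → ℝ, IsWeighted t ∧ BalancedW t ∧
    ∀ x y : X, x ≠ y → c x y → 1 / 2 < t x y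

open Classical in
noncomputable def tConfig (x y : X) (a s0 s1 : ℝ) : X → X → ℝ :=
  fun u v =>
    if u = v then 0
    else if u = x ∧ v = y then a
    else if u = y ∧ v = x then 1 - a
    else if u = x then s0
    else if v = x then 1 - s0
    else if u = y then s1
    else if v = y then 1 - s1
    else 1 / 2

/-- `Prd_ℓ(𝒟)`. -/
noncomputable def PrdL [Fintype X] (l : ℕ) (D : Set (X → X → Prop)) : Set (ℝ × ℝ) :=
  {p | ∃ c ∈ D, ∃ x y : X, x ≠ y ∧ (c x y ↔ l = 1) ∧
    p.1 = (Set.ncard {z : X | z ≠ x ∧ z ≠ y ∧ c x z} : ℝ) / ((Fintype.card X : ℝ) - 2) ∧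
    p.2 = (Set.ncard {z : X | z ≠ x ∧ z ≠ y ∧ c y z} : ℝ) / ((Fintype.card X : ℝ) - 2)}

/-- `Pr_A(𝒟)`. -/
noncomputable def PrA [Fintype X] (A : Set ℝ) (D : Set (X → X → Prop)) : Set (ℝ × ℝ) :=
  {p | 0 ≤ p.1 ∧ p.1 ≤ 1 ∧ 0 ≤ p.2 ∧ p.2 ≤ 1 ∧
    ∃ x y : X, x ≠ y ∧ ∃ a ∈ A, tConfig x y a p.1 p.2 ∈ prCl D}

/-- `V_ℓ(d)` as a subset of `ℝ²`. -/
noncomputable def Vset [Fintype X] (l : ℕ) (d : X → X → Prop) : Set (ℝ × ℝ) :=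
  {p | ∃ x y : X, x ≠ y ∧ (if l = 1 then d x y else d y x) ∧
    p = ((valT d x : ℝ), (valT d y : ℝ))}

/-- `V*_ℓ(d)`. -/
noncomputable def VstarSet [Fintype X] (l : ℕ) (d : X → X → Prop) : Set (ℝ × ℝ) :=
  {p | ∃ q ∈ Vset l d, p = (q.1 - (l : ℝ), q.2 - (1 - (l : ℝ)))}

open Classical in
noncomputable def tCycle (k : ℕ) (xs : ℕ → X) (a : ℝ) : X → X → ℝ :=
  fun u v =>
    if u = v then 0
    else if ∃ i < k, u = xs i ∧ v = xs ((i + 1) % k) then a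
    else if ∃ i < k, v = xs i ∧ u = xs ((i + 1) % k) then 1 - a
    else 1 / 2

open Classical in
noncomputable def tTriple (x y z : X) : X → X → ℝ :=
  fun u v =>
    if u = v then 0
    else if (u, v) = (x, y) ∨ (u, v) = (y, z) ∨ (u, v) = (z, x) then 1
    else if (u, v) = (y, x) ∨ (u, v) = (z, y) ∨ (u, v) = (x, z) then 0
    else 1 / 2

/-- The dual (reverse) tournament. -/
def dualT (c : X → X → Prop) : X → X → Prop := fun x y => c y x

/-- The symmetric closure (orbit) of a single tournament. -/
def symCl (c : X → X → Prop) : Set (X → X → Prop) :=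
  {d | ∃ π : Equiv.Perm X, d = permAct π c}

open Finset

lemma weighted_of_prCl (D : Set (X → X → Prop)) (hT : ∀ c ∈ D, IsTournament c)
    {t : X → X → ℝ} (ht : t ∈ prCl D) : IsWeighted t := by
  have hconv : Convex ℝ {t : X → X → ℝ | IsWeighted t} := by
    intro f hf g hg a b ha hb hab
    intro x y hxy
    obtain ⟨hf1, hf2, hf3⟩ := hf x y hxy
    obtain ⟨hg1, hg2, hg3⟩ := hg x y hxy
    simp only [Pi.add_apply, Pi.smul_apply, smul_eq_mul]
    refine ⟨by positivity, ?_, ?_⟩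
    · nlinarith
    · rw [hf3, hg3]; ring_nf; linarith
  have hsub : tOf '' D ⊆ {t : X → X → ℝ | IsWeighted t} := by
    rintro _ ⟨c, hc, rfl⟩ x y hxy
    obtain ⟨hirr, hone⟩ := hT c hc
    by_cases h : c x y
    · have : ¬ c y x := (hone x y hxy).1 h
      simp [tOf, h, this]
    · have : c y x := by
        by_contra hyx
        exact h ((hone x y hxy).2 hyx)
      simp [tOf, h, this]
  exact convexHull_min hsub hconv ht

lemma cardS [Fintype X] [DecidableEq X] (x y : X) (hxy : x ≠ y) :
    (Finset.univ.filter (fun π : Equiv.Perm X => π x = x ∧ π y = y)).card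
      = Nat.factorial (Fintype.card X - 2) := by
  classical
  have h1 : (Finset.univ.filter (fun π : Equiv.Perm X => π x = x ∧ π y = y)).card
      = Fintype.card {π : Equiv.Perm X // π x = x ∧ π y = y} := (Fintype.card_subtype _).symm
  have e1 : {f : Equiv.Perm X // ∀ a, ¬ ¬(a = x ∨ a = y) → f a = a}
      ≃ {π : Equiv.Perm X // π x = x ∧ π y = y} := by
    apply Equiv.subtypeEquivRight
    intro f
    constructor
    · intro h
      exact ⟨h x (by tauto), h y (by tauto)⟩
    · rintro ⟨h1, h2⟩ a ha
      rcases not_not.mp ha with rfl | rfl <;> assumption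
  have e2 : Equiv.Perm {z : X // ¬(z = x ∨ z = y)}
      ≃ {π : Equiv.Perm X // π x = x ∧ π y = y} :=
    (Equiv.Perm.subtypeEquivSubtypePerm _).trans e1
  rw [h1, ← Fintype.card_congr e2, Fintype.card_perm]
  congr 1
  have : Fintype.card {z : X // z = x ∨ z = y} = 2 := by
    rw [Fintype.card_subtype]
    have : Finset.univ.filter (fun z : X => z = x ∨ z = y) = {x, y} := by
      ext z; simp [or_comm]
    rw [this, Finset.card_insert_of_notMem (by simp [hxy]), Finset.card_singleton]
  rw [Fintype.card_subtype_compl, this]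

section
variable [Fintype X] [DecidableEq X]

lemma sum_reindexS (x y : X) (σ : Equiv.Perm X) (hσx : σ x = x) (hσy : σ y = y)
    (f : Equiv.Perm X → ℝ) :
    ∑ π ∈ univ.filter (fun π : Equiv.Perm X => π x = x ∧ π y = y), f (σ * π)
      = ∑ π ∈ univ.filter (fun π : Equiv.Perm X => π x = x ∧ π y = y), f π := by
  apply Finset.sum_equiv (Equiv.mulLeft σ)
  · intro π
    simp only [Finset.mem_filter, Finset.mem_univ, true_and, Equiv.coe_mulLeft,
      Equiv.Perm.mul_apply]
    constructor
    · rintro ⟨h1, h2⟩; rw [h1, h2]; exact ⟨hσx, hσy⟩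
    · rintro ⟨h1, h2⟩
      exact ⟨σ.injective (by rw [h1, hσx]), σ.injective (by rw [h2, hσy])⟩
  · intro π _; rfl

lemma sum_reindexK (x y : X) (π : Equiv.Perm X) (hx : π x = x) (hy : π y = y) (g : X → ℝ) :
    ∑ z ∈ univ.filter (fun z : X => z ≠ x ∧ z ≠ y), g (π.symm z)
      = ∑ z ∈ univ.filter (fun z : X => z ≠ x ∧ z ≠ y), g z := by
  apply Finset.sum_equiv π.symm
  · intro z
    simp only [Finset.mem_filter, Finset.mem_univ, true_and]
    simp only [ne_eq, Equiv.symm_apply_eq, hx, hy]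
  · intro z _; rfl

lemma cardK (x y : X) (hxy : x ≠ y) :
    (univ.filter (fun z : X => z ≠ x ∧ z ≠ y)).card = Fintype.card X - 2 := by
  have h : univ.filter (fun z : X => z ≠ x ∧ z ≠ y) = ({x, y} : Finset X)ᶜ := by
    ext z; simp [not_or]
  rw [h, Finset.card_compl, Finset.card_insert_of_notMem (by simp [hxy]),
    Finset.card_singleton]

lemma col_sum (x y : X) (hxy : x ≠ y) (g : X → ℝ) (v : X) (hvx : v ≠ x) (hvy : v ≠ y) :
    ((Fintype.card X - 2 : ℕ) : ℝ) *
        ∑ π ∈ univ.filter (fun π : Equiv.Perm X => π x = x ∧ π y = y), g (π.symm v)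
      = ((univ.filter (fun π : Equiv.Perm X => π x = x ∧ π y = y)).card : ℝ) *
        ∑ z ∈ univ.filter (fun z : X => z ≠ x ∧ z ≠ y), g z := by
  set S := univ.filter (fun π : Equiv.Perm X => π x = x ∧ π y = y) with hS
  set K := univ.filter (fun z : X => z ≠ x ∧ z ≠ y) with hK
  have indep : ∀ v' ∈ K, ∑ π ∈ S, g (π.symm v') = ∑ π ∈ S, g (π.symm v) := by
    intro v' hv'
    simp only [hK, Finset.mem_filter, Finset.mem_univ, true_and] at hv'
    have h := sum_reindexS x y (Equiv.swap v v')
      (Equiv.swap_apply_of_ne_of_ne (Ne.symm hvx) (Ne.symm hv'.1))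
      (Equiv.swap_apply_of_ne_of_ne (Ne.symm hvy) (Ne.symm hv'.2))
      (fun π => g (π.symm v))
    rw [← h]
    apply Finset.sum_congr rfl
    intro π _
    have : (Equiv.swap v v' * π).symm v = π.symm ((Equiv.swap v v').symm v) := rfl
    rw [this, Equiv.symm_swap, Equiv.swap_apply_left]
  have step2 : ∑ v' ∈ K, ∑ π ∈ S, g (π.symm v')
      = (K.card : ℝ) * ∑ π ∈ S, g (π.symm v) := by
    rw [Finset.sum_congr rfl indep, Finset.sum_const, nsmul_eq_mul]
  have step3 : ∑ v' ∈ K, ∑ π ∈ S, g (π.symm v')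
      = (S.card : ℝ) * ∑ z ∈ K, g z := by
    rw [Finset.sum_comm]
    rw [Finset.sum_congr rfl (fun π hπ => ?_), Finset.sum_const, nsmul_eq_mul]
    have hπ' : π x = x ∧ π y = y := by simpa [hS] using hπ
    exact sum_reindexK x y π hπ'.1 hπ'.2 g
  rw [← cardK x y hxy, ← hK, ← step2, step3]

lemma mid_sum (x y : X) (t : X → X → ℝ) (hw : IsWeighted t) (u v : X) (huv : u ≠ v)
    (hux : u ≠ x) (huy : u ≠ y) (hvx : v ≠ x) (hvy : v ≠ y) :
    2 * ∑ π ∈ univ.filter (fun π : Equiv.Perm X => π x = x ∧ π y = y),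
        t (π.symm u) (π.symm v)
      = ((univ.filter (fun π : Equiv.Perm X => π x = x ∧ π y = y)).card : ℝ) := by
  set S := univ.filter (fun π : Equiv.Perm X => π x = x ∧ π y = y) with hS
  have h := sum_reindexS x y (Equiv.swap u v)
    (Equiv.swap_apply_of_ne_of_ne (Ne.symm hux) (Ne.symm hvx))
    (Equiv.swap_apply_of_ne_of_ne (Ne.symm huy) (Ne.symm hvy))
    (fun π => t (π.symm u) (π.symm v))
  have h2 : ∑ π ∈ S, t (π.symm u) (π.symm v) = ∑ π ∈ S, t (π.symm v) (π.symm u) := by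
    rw [← h]
    apply Finset.sum_congr rfl
    intro π _
    have h1 : (Equiv.swap u v * π).symm u = π.symm ((Equiv.swap u v).symm u) := rfl
    have h2 : (Equiv.swap u v * π).symm v = π.symm ((Equiv.swap u v).symm v) := rfl
    rw [h1, h2, Equiv.symm_swap, Equiv.swap_apply_left, Equiv.swap_apply_right]
  have h3 : ∀ π : Equiv.Perm X,
      t (π.symm u) (π.symm v) + t (π.symm v) (π.symm u) = 1 := by
    intro π
    have hne : π.symm u ≠ π.symm v := fun h => huv (π.symm.injective h)
    have := (hw (π.symm u) (π.symm v) hne).2.2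
    linarith
  have : ∑ π ∈ S, (t (π.symm u) (π.symm v) + t (π.symm v) (π.symm u)) = (S.card : ℝ) := by
    rw [Finset.sum_congr rfl (fun π _ => h3 π), Finset.sum_const, nsmul_eq_mul, mul_one]
  rw [Finset.sum_add_distrib, ← h2] at this
  linarith

end

lemma solve_col {N c s A : ℝ} (hN : N ≠ 0) (hc : c ≠ 0) (h : c * A = N * s) :
    A = N * s / c := by
  field_simp
  linear_combination h


theorem stmt8 [Fintype X] [DecidableEq X] (hcard : 3 ≤ Fintype.card X)
    (D : Set (X → X → Prop)) (hT : ∀ c ∈ D, IsTournament c) (hsym : SymmetricSet D)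
    (t : X → X → ℝ) (ht : t ∈ prCl D) (x y : X) (hxy : x ≠ y) :
    (fun u v : X => (1 / ((Nat.factorial (Fintype.card X - 2)) : ℝ)) *
        ∑ π ∈ Finset.univ.filter (fun π : Equiv.Perm X => π x = x ∧ π y = y),
          t (π.symm u) (π.symm v)) ∈ prCl D ∧
    ∀ u v : X, u ≠ v →
      (1 / ((Nat.factorial (Fintype.card X - 2)) : ℝ)) *
          (∑ π ∈ Finset.univ.filter (fun π : Equiv.Perm X => π x = x ∧ π y = y),
            t (π.symm u) (π.symm v)) =
        tConfig x y (t x y)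
          ((∑ᶠ z ∈ {z : X | z ≠ x ∧ z ≠ y}, t x z) / ((Fintype.card X : ℝ) - 2))
          ((∑ᶠ z ∈ {z : X | z ≠ x ∧ z ≠ y}, t y z) / ((Fintype.card X : ℝ) - 2)) u v := by
  have hw : IsWeighted t := weighted_of_prCl D hT ht
  set S := Finset.univ.filter (fun π : Equiv.Perm X => π x = x ∧ π y = y) with hSdef
  have hScard : S.card = Nat.factorial (Fintype.card X - 2) := cardS x y hxy
  have hN0 : ((Nat.factorial (Fintype.card X - 2) : ℝ)) ≠ 0 := by
    exact_mod_cast (Nat.factorial_pos _).ne'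
  have hc3 : (3 : ℝ) ≤ (Fintype.card X : ℝ) := by exact_mod_cast hcard
  have hn2 : ((Fintype.card X : ℝ) - 2) ≠ 0 := by linarith
  have hcast : ((Fintype.card X - 2 : ℕ) : ℝ) = (Fintype.card X : ℝ) - 2 := by
    have h2 : 2 ≤ Fintype.card X := by omega
    rw [Nat.cast_sub h2]; norm_num
  have hmemS : ∀ π ∈ S, π x = x ∧ π y = y := by
    intro π hπ; simpa [hSdef] using hπ
  have hsymmx : ∀ π ∈ S, π.symm x = x := by
    intro π hπ; exact (Equiv.symm_apply_eq π).mpr (hmemS π hπ).1.symm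
  have hsymmy : ∀ π ∈ S, π.symm y = y := by
    intro π hπ; exact (Equiv.symm_apply_eq π).mpr (hmemS π hπ).2.symm
  constructor
  · -- membership in prCl D
    have hmem : ∀ π : Equiv.Perm X, (fun u v => t (π.symm u) (π.symm v)) ∈ prCl D := by
      intro π
      let L : (X → X → ℝ) →ₗ[ℝ] (X → X → ℝ) :=
        { toFun := fun f => fun u v => f (π.symm u) (π.symm v)
          map_add' := fun f g => rfl
          map_smul' := fun c f => rfl }
      have h1 : L t ∈ L '' (convexHull ℝ (tOf '' D)) := ⟨t, ht, rfl⟩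
      rw [L.image_convexHull] at h1
      refine convexHull_mono ?_ h1
      rintro _ ⟨_, ⟨c, hc, rfl⟩, rfl⟩
      exact ⟨permAct π c, hsym π c hc, rfl⟩
    have key : (fun u v : X => (1 / ((Nat.factorial (Fintype.card X - 2)) : ℝ)) *
        ∑ π ∈ S, t (π.symm u) (π.symm v))
        = ∑ π ∈ S, (1 / ((Nat.factorial (Fintype.card X - 2)) : ℝ)) •
            (fun u v : X => t (π.symm u) (π.symm v)) := by
      funext u v
      simp [Finset.sum_apply, Finset.mul_sum]
    rw [key]
    refine (convex_convexHull ℝ _).sum_mem (fun π _ => by positivity) ?_ (fun π _ => hmem π)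
    rw [Finset.sum_const, hScard, nsmul_eq_mul]
    field_simp
  · intro u v huv
    have hfin : ∀ g : X → ℝ, ∑ᶠ z ∈ {z : X | z ≠ x ∧ z ≠ y}, g z
        = ∑ z ∈ univ.filter (fun z : X => z ≠ x ∧ z ≠ y), g z := by
      intro g
      rw [show {z : X | z ≠ x ∧ z ≠ y}
          = ↑(univ.filter (fun z : X => z ≠ x ∧ z ≠ y)) by ext; simp]
      exact finsum_mem_coe_finset _ _
    rw [hfin, hfin]
    set Sx := ∑ z ∈ univ.filter (fun z : X => z ≠ x ∧ z ≠ y), t x z with hSxdef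
    set Sy := ∑ z ∈ univ.filter (fun z : X => z ≠ x ∧ z ≠ y), t y z with hSydef
    by_cases hux : u = x
    · by_cases hvy : v = y
      · -- case A
        rw [hux, hvy]
        have hsum : ∑ π ∈ S, t (π.symm x) (π.symm y) = (S.card : ℝ) * t x y := by
          rw [Finset.sum_congr rfl
            (fun π hπ => by rw [hsymmx π hπ, hsymmy π hπ]),
            Finset.sum_const, nsmul_eq_mul]
        rw [hsum, hScard]
        have hcfg : tConfig x y (t x y) (Sx / ((Fintype.card X : ℝ) - 2))
            (Sy / ((Fintype.card X : ℝ) - 2)) x y = t x y := by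
          simp [tConfig, hxy]
        rw [hcfg]
        field_simp
      · -- case C
        have hvx : v ≠ x := fun h => huv (hux.trans h.symm)
        rw [hux]
        have hsum : ∑ π ∈ S, t (π.symm x) (π.symm v)
            = ∑ π ∈ S, t x (π.symm v) :=
          Finset.sum_congr rfl (fun π hπ => by rw [hsymmx π hπ])
        rw [hsum]
        have h := col_sum x y hxy (t x) v hvx hvy
        rw [hScard, hcast, ← hSxdef] at h
        have hA := solve_col hN0 hn2 h
        rw [hA]
        have hcfg : tConfig x y (t x y) (Sx / ((Fintype.card X : ℝ) - 2))
            (Sy / ((Fintype.card X : ℝ) - 2)) x v = Sx / ((Fintype.card X : ℝ) - 2) := by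
          simp [tConfig, hxy, Ne.symm hvx, hvy]
        rw [hcfg]
        field_simp
    · by_cases huy : u = y
      · by_cases hvx : v = x
        · -- case B
          rw [huy, hvx]
          have hsum : ∑ π ∈ S, t (π.symm y) (π.symm x) = (S.card : ℝ) * (1 - t x y) := by
            rw [Finset.sum_congr rfl (fun π hπ => by
              rw [hsymmx π hπ, hsymmy π hπ, (hw x y hxy).2.2]),
              Finset.sum_const, nsmul_eq_mul]
          rw [hsum, hScard]
          have hcfg : tConfig x y (t x y) (Sx / ((Fintype.card X : ℝ) - 2))
              (Sy / ((Fintype.card X : ℝ) - 2)) y x = 1 - t x y := by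
            simp [tConfig, hxy, Ne.symm hxy]
          rw [hcfg]
          field_simp
        · -- case E
          have hvy : v ≠ y := fun h => huv (huy.trans h.symm)
          rw [huy]
          have hsum : ∑ π ∈ S, t (π.symm y) (π.symm v)
              = ∑ π ∈ S, t y (π.symm v) :=
            Finset.sum_congr rfl (fun π hπ => by rw [hsymmy π hπ])
          rw [hsum]
          have h := col_sum x y hxy (t y) v hvx hvy
          rw [hScard, hcast, ← hSydef] at h
          have hA := solve_col hN0 hn2 h
          rw [hA]
          have hcfg : tConfig x y (t x y) (Sx / ((Fintype.card X : ℝ) - 2))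
              (Sy / ((Fintype.card X : ℝ) - 2)) y v = Sy / ((Fintype.card X : ℝ) - 2) := by
            simp [tConfig, Ne.symm hxy, Ne.symm hvy, hvx]
          rw [hcfg]
          field_simp
      · by_cases hvx : v = x
        · -- case D
          rw [hvx]
          have hsum : ∑ π ∈ S, t (π.symm u) (π.symm x)
              = ∑ π ∈ S, (1 - t x (π.symm u)) := by
            refine Finset.sum_congr rfl (fun π hπ => ?_)
            have hne : π.symm u ≠ x := fun h => hux (by
              have := congrArg π h
              rwa [Equiv.apply_symm_apply, (hmemS π hπ).1] at this)
            rw [hsymmx π hπ, (hw x (π.symm u) (Ne.symm hne)).2.2]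
          rw [hsum, Finset.sum_sub_distrib, Finset.sum_const, nsmul_eq_mul, mul_one]
          have h := col_sum x y hxy (t x) u hux huy
          rw [hScard, hcast, ← hSxdef] at h
          have hA := solve_col hN0 hn2 h
          rw [hA, hScard]
          have hcfg : tConfig x y (t x y) (Sx / ((Fintype.card X : ℝ) - 2))
              (Sy / ((Fintype.card X : ℝ) - 2)) u x
              = 1 - Sx / ((Fintype.card X : ℝ) - 2) := by
            simp [tConfig, hux, huy, Ne.symm hxy]
          rw [hcfg]
          field_simp
        · by_cases hvy : v = y
          · -- case F
            rw [hvy]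
            have hsum : ∑ π ∈ S, t (π.symm u) (π.symm y)
                = ∑ π ∈ S, (1 - t y (π.symm u)) := by
              refine Finset.sum_congr rfl (fun π hπ => ?_)
              have hne : π.symm u ≠ y := fun h => huy (by
                have := congrArg π h
                rwa [Equiv.apply_symm_apply, (hmemS π hπ).2] at this)
              rw [hsymmy π hπ, (hw y (π.symm u) (Ne.symm hne)).2.2]
            rw [hsum, Finset.sum_sub_distrib, Finset.sum_const, nsmul_eq_mul, mul_one]
            have h := col_sum x y hxy (t y) u hux huy
            rw [hScard, hcast, ← hSydef] at h
            have hA := solve_col hN0 hn2 h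
            rw [hA, hScard]
            have hcfg : tConfig x y (t x y) (Sx / ((Fintype.card X : ℝ) - 2))
                (Sy / ((Fintype.card X : ℝ) - 2)) u y
                = 1 - Sy / ((Fintype.card X : ℝ) - 2) := by
              simp [tConfig, hux, huy, Ne.symm hxy]
            rw [hcfg]
            field_simp
          · -- case G
            have h := mid_sum x y t hw u v huv hux huy hvx hvy
            rw [hScard] at h
            have hhalf : ∑ π ∈ S, t (π.symm u) (π.symm v)
                = ((Nat.factorial (Fintype.card X - 2) : ℝ)) / 2 := by linarith
            rw [hhalf]
            have hcfg : tConfig x y (t x y) (Sx / ((Fintype.card X : ℝ) - 2))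
                (Sy / ((Fintype.card X : ℝ) - 2)) u v = 1 / 2 := by
              simp [tConfig, hux, huy, hvx, hvy, huv]
            rw [hcfg]
            field_simp
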